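/- Let d ≥ 4 be even, l = d/2, 0 < ε ≤ 1/3, and F_ε(X,Y) = ∏ᵢ₌₁^l (X − ρⁱεY)(ρⁱεX − Y) with ρ a primitive l-th root of unity. Then for every T ∈ GL₂(ℝ) with |det T| = 1, the height H(F_ε∘T) (product of the Euclidean norms of the coefficient vectors of the 2l linear factors composed with T) satisfies H(F_ε∘T) ≥ (1 − ε²)^l. Consequently (1+ε²)^l = H(F_ε) ≥ 𝔪(F_ε) ≥ (1−ε²)^l. -/

import Mathlib

open scoped BigOperators

/-- The Euclidean (L²) norm of a coefficient vector in `ℂⁿ`. -/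
noncomputable def e2norm {n : ℕ} (v : Fin n → ℂ) : ℝ := Real.sqrt (∑ j, ‖v j‖ ^ 2)

/-- Coefficient vectors of the linear factors of `F ∘ S`. -/
noncomputable def compMat {n d : ℕ} (L : Fin d → Fin n → ℂ)
    (S : Matrix (Fin n) (Fin n) ℝ) : Fin d → Fin n → ℂ :=
  fun i j => ∑ k, L i k * (S k j : ℂ)

/-- The geometric height `𝔪(F) = inf {H(F∘S) : S ∈ GL₂(ℝ), |det S| = 1}`. -/
noncomputable def mD {n d : ℕ} (L : Fin d → Fin n → ℂ) : ℝ :=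
  sInf {h : ℝ | ∃ S : Matrix (Fin n) (Fin n) ℝ, |S.det| = 1 ∧
    h = ∏ i, e2norm (compMat L S i)}

noncomputable def LFeps (l : ℕ) (ε : ℝ) (ρ : ℂ) : Fin (2 * l) → Fin 2 → ℂ :=
  fun i => if (i : ℕ) < l then ![1, -(ρ ^ ((i : ℕ) + 1) * (ε : ℂ))]
    else ![ρ ^ ((i : ℕ) - l + 1) * (ε : ℂ), -1]

lemma e2norm_two (v : Fin 2 → ℂ) : e2norm v = Real.sqrt (‖v 0‖ ^ 2 + ‖v 1‖ ^ 2) := by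
  simp [e2norm, Fin.sum_univ_two]

lemma e2norm_nonneg {n : ℕ} (v : Fin n → ℂ) : 0 ≤ e2norm v := Real.sqrt_nonneg _

lemma hadamard2 (a b c d : ℂ) :
    ‖a * d - b * c‖ ≤ Real.sqrt (‖a‖ ^ 2 + ‖b‖ ^ 2) * Real.sqrt (‖c‖ ^ 2 + ‖d‖ ^ 2) := by
  have h1 : ‖a * d - b * c‖ ≤ ‖a‖ * ‖d‖ + ‖b‖ * ‖c‖ := by
    calc ‖a * d - b * c‖ ≤ ‖a * d‖ + ‖b * c‖ := norm_sub_le _ _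
    _ = ‖a‖ * ‖d‖ + ‖b‖ * ‖c‖ := by rw [norm_mul, norm_mul]
  refine h1.trans ?_
  rw [← Real.sqrt_mul (by positivity)]
  rw [Real.le_sqrt (by positivity) (by positivity)]
  nlinarith [sq_nonneg (‖a‖ * ‖c‖ - ‖b‖ * ‖d‖), norm_nonneg a, norm_nonneg b,
    norm_nonneg c, norm_nonneg d]

lemma det_compMat (u v : Fin 2 → ℂ) (T : Matrix (Fin 2) (Fin 2) ℝ) :
    (∑ k, u k * (T k 0 : ℂ)) * (∑ k, v k * (T k 1 : ℂ)) -
      (∑ k, u k * (T k 1 : ℂ)) * (∑ k, v k * (T k 0 : ℂ))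
      = (u 0 * v 1 - u 1 * v 0) * (T.det : ℂ) := by
  rw [Matrix.det_fin_two]
  simp [Fin.sum_univ_two]
  push_cast
  ring

lemma prod_pair {l : ℕ} (f : Fin (2 * l) → ℝ) :
    ∏ i, f i = ∏ i : Fin l, (f ⟨i, by have := i.isLt; omega⟩ *
      f ⟨(i : ℕ) + l, by have := i.isLt; omega⟩) := by
  set g : ℕ → ℝ := fun j => if h : j < 2 * l then f ⟨j, h⟩ else 1 with hg
  have h1 : ∀ i : Fin (2 * l), f i = g i := by
    intro i; simp [hg, i.isLt]
  have h2 : ∏ i, f i = ∏ i : Fin (2 * l), g i := Finset.prod_congr rfl (fun i _ => h1 i)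
  have h3 : ∏ i ∈ Finset.range (2 * l), g i =
      (∏ i ∈ Finset.range l, g i) * ∏ i ∈ Finset.range l, g (l + i) := by
    rw [two_mul]; exact Finset.prod_range_add g l l
  rw [h2, Fin.prod_univ_eq_prod_range g (2 * l), h3,
    ← Finset.prod_mul_distrib, ← Fin.prod_univ_eq_prod_range (fun j => g j * g (l + j)) l]
  refine Finset.prod_congr rfl (fun i _ => ?_)
  have hi := i.isLt
  have e1 : g i = f ⟨i, by omega⟩ := dif_pos (by omega)
  have e2 : g (l + i) = f ⟨(i : ℕ) + l, by omega⟩ := by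
    rw [hg]
    simp only
    rw [dif_pos (by omega)]
    exact congrArg f (Fin.ext (by simp [Nat.add_comm]))
  rw [e1, e2]

/-- Let `d ≥ 4` be even, `l = d/2`, `0 < ε ≤ 1/3`, and
`F_ε(X,Y) = ∏ᵢ₌₁^l (X − ρⁱεY)(ρⁱεX − Y)` with `ρ` a primitive `l`-th root of unity.
Then for every `T ∈ GL₂(ℝ)` with `|det T| = 1` the height `H(F_ε ∘ T)` satisfies
`H(F_ε ∘ T) ≥ (1 − ε²)^l`; consequently `(1+ε²)^l = H(F_ε) ≥ 𝔪(F_ε) ≥ (1−ε²)^l`. -/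
theorem Feps_height_bounds (d l : ℕ) (hd : 4 ≤ d) (hdl : d = 2 * l)
    (ε : ℝ) (hε0 : 0 < ε) (hε : ε ≤ 1 / 3)
    (ρ : ℂ) (hρ : IsPrimitiveRoot ρ l) :
    (∀ T : Matrix (Fin 2) (Fin 2) ℝ, |T.det| = 1 →
      (1 - ε ^ 2) ^ l ≤ ∏ i, e2norm (compMat (LFeps l ε ρ) T i)) ∧
    (∏ i, e2norm (LFeps l ε ρ i)) = (1 + ε ^ 2) ^ l ∧
    mD (LFeps l ε ρ) ≤ (1 + ε ^ 2) ^ l ∧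
    (1 - ε ^ 2) ^ l ≤ mD (LFeps l ε ρ) := by
  have hl : 2 ≤ l := by omega
  have hρ1 : ‖ρ‖ = 1 := by
    have h : ‖ρ‖ ^ l = 1 := by rw [← norm_pow, hρ.pow_eq_one, norm_one]
    rcases (pow_eq_one_iff_cases).mp h with h' | h' | h'
    · omega
    · exact h'
    · exfalso; have := norm_nonneg ρ; rw [h'.1] at this; linarith
  have hε2 : (0:ℝ) ≤ 1 - ε ^ 2 := by nlinarith
  set L := LFeps l ε ρ with hL
  -- norm of ε² ρ^k
  have hnorm : ∀ k : ℕ, ‖(ε:ℂ) ^ 2 * ρ ^ k‖ = ε ^ 2 := by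
    intro k
    rw [norm_mul, norm_pow, norm_pow, hρ1, one_pow, mul_one, Complex.norm_real,
      Real.norm_eq_abs, abs_of_pos hε0]
  -- the two vectors of each pair
  have hL1 : ∀ i : Fin l, ∀ h : (i:ℕ) < 2 * l,
      L ⟨i, h⟩ = ![1, -(ρ ^ ((i:ℕ) + 1) * (ε : ℂ))] := by
    intro i h
    simp only [hL, LFeps, if_pos (show ((⟨(i:ℕ), h⟩ : Fin (2*l)) : ℕ) < l from i.isLt)]
  have hL2 : ∀ i : Fin l, ∀ h : (i:ℕ) + l < 2 * l,
      L ⟨(i:ℕ) + l, h⟩ = ![ρ ^ ((i:ℕ) + 1) * (ε : ℂ), -1] := by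
    intro i h
    have h1 : ¬ (((⟨(i:ℕ) + l, h⟩ : Fin (2*l)) : ℕ) < l) := by simpa using (by omega : ¬ ((i:ℕ) + l < l))
    simp only [hL, LFeps, if_neg h1]
    norm_num
  -- key lower bound
  have key : ∀ T : Matrix (Fin 2) (Fin 2) ℝ, |T.det| = 1 →
      (1 - ε ^ 2) ^ l ≤ ∏ i, e2norm (compMat L T i) := by
    intro T hT
    rw [prod_pair (fun i => e2norm (compMat L T i))]
    have hpair : ∀ i : Fin l,
        1 - ε ^ 2 ≤ e2norm (compMat L T ⟨i, by have := i.isLt; omega⟩) *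
          e2norm (compMat L T ⟨(i:ℕ) + l, by have := i.isLt; omega⟩) := by
      intro i
      have hia : ((i:ℕ) : ℕ) < 2 * l := by have := i.isLt; omega
      have hib : (i:ℕ) + l < 2 * l := by have := i.isLt; omega
      set u : Fin 2 → ℂ := L ⟨i, hia⟩ with hu
      set v : Fin 2 → ℂ := L ⟨(i:ℕ) + l, hib⟩ with hv
      have huv : u 0 * v 1 - u 1 * v 0 = (ε:ℂ) ^ 2 * ρ ^ (2 * (i:ℕ) + 2) - 1 := by
        rw [hu, hv, hL1 i hia, hL2 i hib]
        simp [Matrix.cons_val_zero, Matrix.cons_val_one]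
        ring
      have h1 : 1 - ε ^ 2 ≤ ‖(u 0 * v 1 - u 1 * v 0) * (T.det : ℂ)‖ := by
        rw [norm_mul, huv, Complex.norm_real, Real.norm_eq_abs, hT, mul_one]
        have := norm_sub_norm_le (1 : ℂ) ((ε:ℂ) ^ 2 * ρ ^ (2 * (i:ℕ) + 2))
        rw [norm_one, hnorm] at this
        calc 1 - ε ^ 2 ≤ ‖(1:ℂ) - (ε:ℂ) ^ 2 * ρ ^ (2 * (i:ℕ) + 2)‖ := this
          _ = ‖(ε:ℂ) ^ 2 * ρ ^ (2 * (i:ℕ) + 2) - 1‖ := norm_sub_rev _ _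
      rw [← det_compMat u v T] at h1
      refine h1.trans ?_
      have h2 := hadamard2 (∑ k, u k * (T k 0 : ℂ)) (∑ k, u k * (T k 1 : ℂ))
        (∑ k, v k * (T k 0 : ℂ)) (∑ k, v k * (T k 1 : ℂ))
      refine h2.trans (le_of_eq ?_)
      rw [e2norm_two, e2norm_two]
      rfl
    calc (1 - ε ^ 2) ^ l = ∏ _i : Fin l, (1 - ε ^ 2) := by
          rw [Finset.prod_const, Finset.card_univ, Fintype.card_fin]
      _ ≤ _ := Finset.prod_le_prod (fun i _ => hε2) (fun i _ => hpair i)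
  -- height of F itself
  have hH : ∀ i : Fin (2 * l), e2norm (L i) = Real.sqrt (1 + ε ^ 2) := by
    intro i
    rw [e2norm_two]
    by_cases h : (i:ℕ) < l
    · simp only [hL, LFeps, if_pos h]
      congr 1
      simp [norm_mul, norm_pow, hρ1, Complex.norm_real, Real.norm_eq_abs, abs_of_pos hε0]
    · simp only [hL, LFeps, if_neg h]
      have : ‖ρ ^ ((i:ℕ) - l + 1) * (ε : ℂ)‖ = ε := by
        rw [norm_mul, norm_pow, hρ1, one_pow, one_mul, Complex.norm_real, Real.norm_eq_abs, abs_of_pos hε0]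
      simp [this, hρ1, abs_of_pos hε0]
      ring_nf
  have hHF : (∏ i, e2norm (L i)) = (1 + ε ^ 2) ^ l := by
    calc (∏ i, e2norm (L i)) = ∏ _i : Fin (2 * l), Real.sqrt (1 + ε ^ 2) :=
        Finset.prod_congr rfl (fun i _ => hH i)
      _ = Real.sqrt (1 + ε ^ 2) ^ (2 * l) := by
        rw [Finset.prod_const, Finset.card_univ, Fintype.card_fin]
      _ = (Real.sqrt (1 + ε ^ 2) ^ 2) ^ l := by rw [← pow_mul]
      _ = (1 + ε ^ 2) ^ l := by rw [Real.sq_sqrt (by positivity)]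
  -- membership of H(F) in the set defining mD
  have hone : compMat L (1 : Matrix (Fin 2) (Fin 2) ℝ) = L := by
    funext i j
    simp [compMat, Matrix.one_apply, apply_ite, mul_ite]
  have hmem : (1 + ε ^ 2) ^ l ∈ {h : ℝ | ∃ S : Matrix (Fin 2) (Fin 2) ℝ, |S.det| = 1 ∧
      h = ∏ i, e2norm (compMat L S i)} := by
    exact ⟨1, by simp [Matrix.det_one], by rw [hone, hHF]⟩
  have hbdd : BddBelow {h : ℝ | ∃ S : Matrix (Fin 2) (Fin 2) ℝ, |S.det| = 1 ∧
      h = ∏ i, e2norm (compMat L S i)} := by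
    refine ⟨0, ?_⟩
    rintro x ⟨S, -, rfl⟩
    exact Finset.prod_nonneg (fun i _ => e2norm_nonneg _)
  refine ⟨key, hHF, csInf_le hbdd hmem, le_csInf ⟨_, hmem⟩ ?_⟩
  rintro x ⟨S, hS, rfl⟩
  exact key S hS
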